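/- Centered bilinear block-sum bound (the ρ-trick bound of J₃). Let N ≥ 2, 1 ≤ n ≤ N, and suppose x* ∈ ℝ^d satisfies Σ_{j=1}^m ∇f_j(x*) = 0 (e.g., x* is a stationary point of F). Suppose the Hessians satisfy ‖H_i(x*)‖ ≤ L in operator norm for all i, and ‖∇f_j(x*)‖ ≤ G for all j. Then ‖Σ_{l=1}^N Σ_{i≠j, i,j∈B_l} H_i(x*)·∇f_j(x*) + ((n−1)/(N−1))·Σ_{l≠l'} Σ_{i∈B_l, j∈B_{l'}} H_i(x*)·∇f_j(x*)‖ ≤ ((N−n)/(N−1))·N·b·(b−1)·L·G + ((n−1)/(N−1))·N·b·L·G. -/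

import Mathlib

open Finset

noncomputable section

/-- Euclidean space `ℝ^d`. -/
abbrev Eu (d : ℕ) : Type := EuclideanSpace ℝ (Fin d)

/-- The `l`-th block, as a finset of indices. -/
def blockSet {N b : ℕ} (blk : Fin (N * b) → Fin N) (l : Fin N) : Finset (Fin (N * b)) :=
  Finset.univ.filter (fun i => blk i = l)

lemma block_fiber {d N b : ℕ} (blk : Fin (N * b) → Fin N) (φ : Fin (N * b) → Eu d) :
    (∑ l, ∑ i ∈ blockSet blk l, φ i) = ∑ i, φ i := by
  classical
  simpa [blockSet] using Finset.sum_fiberwise (Finset.univ) blk φ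

lemma rho_aux {d N b : ℕ} (blk : Fin (N * b) → Fin N)
    (hblk : ∀ l, (blockSet blk l).card = b)
    (A : Fin (N * b) → (Eu d →L[ℝ] Eu d)) (g : Fin (N * b) → Eu d) (L G ρ : ℝ)
    (hsum : ∑ j, g j = 0) (hρ0 : 0 ≤ ρ) (hρ1 : ρ ≤ 1)
    (hAg : ∀ i j, ‖A i (g j)‖ ≤ L * G) :
    ‖(∑ l, ∑ i ∈ blockSet blk l, ∑ j ∈ blockSet blk l,
          if i = j then 0 else A i (g j))
        + ρ • ∑ p ∈ Finset.univ.offDiag, ∑ i ∈ blockSet blk p.1, ∑ j ∈ blockSet blk p.2,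
            A i (g j)‖
      ≤ (1 - ρ) * ((N : ℝ) * b * ((b : ℝ) - 1) * (L * G)) + ρ * ((N : ℝ) * b * (L * G)) := by
  classical
  set T : Eu d := ∑ l, ∑ i ∈ blockSet blk l, ∑ j ∈ blockSet blk l,
      if i = j then 0 else A i (g j) with hT
  set D : Eu d := ∑ i, A i (g i) with hD
  set S : Eu d := ∑ p ∈ Finset.univ.offDiag, ∑ i ∈ blockSet blk p.1, ∑ j ∈ blockSet blk p.2,
      A i (g j) with hS
  -- full sum is zero
  have hfull : ∑ p ∈ (Finset.univ ×ˢ Finset.univ : Finset (Fin N × Fin N)),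
      (∑ i ∈ blockSet blk p.1, ∑ j ∈ blockSet blk p.2, A i (g j)) = 0 := by
    rw [Finset.sum_product]
    apply Finset.sum_eq_zero
    intro l _
    have h0 : (∑ l' : Fin N, ∑ i ∈ blockSet blk l, ∑ j ∈ blockSet blk l', A i (g j)) = 0 := by
      rw [Finset.sum_comm]
      apply Finset.sum_eq_zero
      intro i _
      have : (∑ l' : Fin N, ∑ j ∈ blockSet blk l', A i (g j)) = ∑ j, A i (g j) :=
        block_fiber blk _
      rw [this, ← map_sum, hsum, map_zero]
    simpa using h0
  -- diag sum is T + D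
  have hdiag : ∑ p ∈ (Finset.univ : Finset (Fin N)).diag,
      (∑ i ∈ blockSet blk p.1, ∑ j ∈ blockSet blk p.2, A i (g j)) = T + D := by
    rw [Finset.sum_diag]
    have h1 : ∀ l : Fin N, ∑ i ∈ blockSet blk l, ∑ j ∈ blockSet blk l, A i (g j)
        = (∑ i ∈ blockSet blk l, ∑ j ∈ blockSet blk l, if i = j then 0 else A i (g j))
          + ∑ i ∈ blockSet blk l, A i (g i) := by
      intro l
      rw [← Finset.sum_add_distrib]
      refine Finset.sum_congr rfl fun i hi => ?_
      calc ∑ j ∈ blockSet blk l, A i (g j)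
          = ∑ j ∈ blockSet blk l,
              ((if i = j then 0 else A i (g j)) + (if i = j then A i (g j) else 0)) := by
            refine Finset.sum_congr rfl fun j _ => ?_
            by_cases h : i = j <;> simp [h]
        _ = (∑ j ∈ blockSet blk l, if i = j then 0 else A i (g j))
              + ∑ j ∈ blockSet blk l, (if i = j then A i (g j) else 0) :=
            Finset.sum_add_distrib
        _ = (∑ j ∈ blockSet blk l, if i = j then 0 else A i (g j)) + A i (g i) := by
            rw [Finset.sum_ite_eq (blockSet blk l) i (fun j => A i (g j)), if_pos hi]
    calc ∑ l : Fin N, ∑ i ∈ blockSet blk l, ∑ j ∈ blockSet blk l, A i (g j)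
        = ∑ l : Fin N, ((∑ i ∈ blockSet blk l, ∑ j ∈ blockSet blk l,
              if i = j then 0 else A i (g j)) + ∑ i ∈ blockSet blk l, A i (g i)) :=
          Finset.sum_congr rfl fun l _ => h1 l
      _ = T + D := by
          rw [Finset.sum_add_distrib, hT, hD, block_fiber blk (fun i => A i (g i))]
  have hSeq : S = -(T + D) := by
    have hsplit : ∑ p ∈ (Finset.univ : Finset (Fin N)).diag,
          (∑ i ∈ blockSet blk p.1, ∑ j ∈ blockSet blk p.2, A i (g j))
        + ∑ p ∈ (Finset.univ : Finset (Fin N)).offDiag,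
          (∑ i ∈ blockSet blk p.1, ∑ j ∈ blockSet blk p.2, A i (g j))
        = ∑ p ∈ (Finset.univ ×ˢ Finset.univ : Finset (Fin N × Fin N)),
          (∑ i ∈ blockSet blk p.1, ∑ j ∈ blockSet blk p.2, A i (g j)) := by
      rw [← Finset.sum_union (Finset.disjoint_diag_offDiag _), Finset.diag_union_offDiag]
    rw [hfull, hdiag] at hsplit
    rw [hS]
    linear_combination (norm := abel) hsplit
  -- bound on T
  have hTbound : ‖T‖ ≤ (N : ℝ) * b * ((b : ℝ) - 1) * (L * G) := by
    rw [hT]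
    calc ‖∑ l, ∑ i ∈ blockSet blk l, ∑ j ∈ blockSet blk l,
            if i = j then 0 else A i (g j)‖
        ≤ ∑ l : Fin N, ∑ i ∈ blockSet blk l, ∑ j ∈ blockSet blk l,
            ‖if i = j then (0 : Eu d) else A i (g j)‖ := by
          refine le_trans (norm_sum_le _ _) (Finset.sum_le_sum fun l _ => ?_)
          refine le_trans (norm_sum_le _ _) (Finset.sum_le_sum fun i _ => ?_)
          exact norm_sum_le _ _
      _ ≤ ∑ l : Fin N, ∑ i ∈ blockSet blk l, ∑ j ∈ blockSet blk l,
            (if i = j then 0 else L * G) := by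
          refine Finset.sum_le_sum fun l _ => Finset.sum_le_sum fun i _ =>
            Finset.sum_le_sum fun j _ => ?_
          by_cases h : i = j <;> simp [h, hAg i j]
      _ = (N : ℝ) * b * ((b : ℝ) - 1) * (L * G) := by
          have hinner : ∀ (l : Fin N) (i : Fin (N*b)), i ∈ blockSet blk l →
              (∑ j ∈ blockSet blk l, if i = j then (0:ℝ) else L * G)
                = (b : ℝ) * (L * G) - L * G := by
            intro l i hi
            have : ∀ j ∈ blockSet blk l,
                (if i = j then (0:ℝ) else L * G) = L * G - (if i = j then L * G else 0) := by
              intro j _; by_cases h : i = j <;> simp [h]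
            rw [Finset.sum_congr rfl this, Finset.sum_sub_distrib,
              Finset.sum_ite_eq (blockSet blk l) i (fun _ => L * G), if_pos hi,
              Finset.sum_const, hblk l, nsmul_eq_mul]
          have houter : ∀ l : Fin N,
              (∑ i ∈ blockSet blk l, ∑ j ∈ blockSet blk l, if i = j then (0:ℝ) else L * G)
                = (b : ℝ) * ((b : ℝ) * (L * G) - L * G) := by
            intro l
            rw [Finset.sum_congr rfl (hinner l), Finset.sum_const, hblk l, nsmul_eq_mul]
          rw [Finset.sum_congr rfl fun l _ => houter l, Finset.sum_const, Finset.card_univ,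
            Fintype.card_fin, nsmul_eq_mul]
          ring
  -- bound on D
  have hDbound : ‖D‖ ≤ (N : ℝ) * b * (L * G) := by
    rw [hD]
    calc ‖∑ i, A i (g i)‖ ≤ ∑ i : Fin (N * b), L * G :=
          le_trans (norm_sum_le _ _) (Finset.sum_le_sum fun i _ => hAg i i)
      _ = (N : ℝ) * b * (L * G) := by
          rw [Finset.sum_const, Finset.card_univ, Fintype.card_fin, nsmul_eq_mul]
          push_cast; ring
  -- rewrite the expression
  have hexpr : T + ρ • S = (1 - ρ) • T + (-ρ) • D := by
    rw [hSeq]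
    module
  rw [hexpr]
  calc ‖(1 - ρ) • T + (-ρ) • D‖ ≤ ‖(1 - ρ) • T‖ + ‖(-ρ) • D‖ := norm_add_le _ _
    _ = (1 - ρ) * ‖T‖ + ρ * ‖D‖ := by
        rw [norm_smul, norm_smul, Real.norm_eq_abs, Real.norm_eq_abs,
          abs_of_nonneg (by linarith), abs_neg, abs_of_nonneg hρ0]
    _ ≤ (1 - ρ) * ((N : ℝ) * b * ((b : ℝ) - 1) * (L * G)) + ρ * ((N : ℝ) * b * (L * G)) := by
        gcongr <;> linarith


/-- **Centered bilinear block-sum bound (the ρ-trick bound of J₃).**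
If `∑_j ∇f_j(x*) = 0`, `‖H_i(x*)‖ ≤ L` and `‖∇f_j(x*)‖ ≤ G`, then
`‖∑_l ∑_{i≠j∈B_l} H_i(x*)∇f_j(x*) + ((n−1)/(N−1))·∑_{l≠l'} ∑_{i∈B_l,j∈B_{l'}} H_i(x*)∇f_j(x*)‖
  ≤ ((N−n)/(N−1))·N·b·(b−1)·L·G + ((n−1)/(N−1))·N·b·L·G`. -/
theorem rho_trick_block_sum_bound {d N n b : ℕ}
    (hN : 2 ≤ N) (hn1 : 1 ≤ n) (hnN : n ≤ N)
    (blk : Fin (N * b) → Fin N)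
    (hblk : ∀ l, (blockSet blk l).card = b)
    (f : Fin (N * b) → Eu d → ℝ) (L G : ℝ)
    (hf : ∀ i, ContDiff ℝ 2 (f i))
    (xstar : Eu d)
    (hstat : ∑ j, gradient (f j) xstar = 0)
    (hL : ∀ i, ‖fderiv ℝ (gradient (f i)) xstar‖ ≤ L)
    (hG : ∀ j, ‖gradient (f j) xstar‖ ≤ G) :
    ‖(∑ l, ∑ i ∈ blockSet blk l, ∑ j ∈ blockSet blk l,
          if i = j then 0 else fderiv ℝ (gradient (f i)) xstar (gradient (f j) xstar))
        + (((n : ℝ) - 1) / ((N : ℝ) - 1)) •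
            ∑ p ∈ Finset.univ.offDiag, ∑ i ∈ blockSet blk p.1, ∑ j ∈ blockSet blk p.2,
              fderiv ℝ (gradient (f i)) xstar (gradient (f j) xstar)‖
      ≤ (((N : ℝ) - (n : ℝ)) / ((N : ℝ) - 1)) * (N : ℝ) * (b : ℝ) * ((b : ℝ) - 1) * L * G
        + (((n : ℝ) - 1) / ((N : ℝ) - 1)) * (N : ℝ) * (b : ℝ) * L * G := by
  classical
  rcases Nat.eq_zero_or_pos b with hb | hb
  · subst hb
    have he : ∀ l, blockSet blk l = (∅ : Finset (Fin (N * 0))) := fun l =>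
      Finset.card_eq_zero.mp (hblk l)
    simp [he]
  · have hNb : 0 < N * b := Nat.mul_pos (by omega) hb
    have hL0 : 0 ≤ L := le_trans (norm_nonneg _) (hL ⟨0, hNb⟩)
    have hG0 : 0 ≤ G := le_trans (norm_nonneg _) (hG ⟨0, hNb⟩)
    have hN1 : (0:ℝ) < (N:ℝ) - 1 := by
      have h2 : (2:ℝ) ≤ (N:ℝ) := by exact_mod_cast hN
      linarith
    set ρ : ℝ := ((n:ℝ)-1)/((N:ℝ)-1) with hρ
    have hn1' : (1:ℝ) ≤ (n:ℝ) := by exact_mod_cast hn1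
    have hnN' : (n:ℝ) ≤ (N:ℝ) := by exact_mod_cast hnN
    have hρ0 : 0 ≤ ρ := div_nonneg (by linarith) (le_of_lt hN1)
    have hρ1 : ρ ≤ 1 := by rw [hρ, div_le_one hN1]; linarith
    have hAg : ∀ i j, ‖fderiv ℝ (gradient (f i)) xstar (gradient (f j) xstar)‖ ≤ L * G := by
      intro i j
      calc ‖fderiv ℝ (gradient (f i)) xstar (gradient (f j) xstar)‖
          ≤ ‖fderiv ℝ (gradient (f i)) xstar‖ * ‖gradient (f j) xstar‖ :=
            ContinuousLinearMap.le_opNorm _ _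
        _ ≤ L * G := mul_le_mul (hL i) (hG j) (norm_nonneg _) hL0
    have hmain := rho_aux blk hblk (fun i => fderiv ℝ (gradient (f i)) xstar)
      (fun j => gradient (f j) xstar) L G ρ hstat hρ0 hρ1 hAg
    refine le_trans hmain (le_of_eq ?_)
    have heq : (((N:ℝ) - (n:ℝ))/((N:ℝ)-1)) = 1 - ρ := by
      rw [hρ]; field_simp; ring
    rw [heq]; ring

end
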